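/- lim_{η→0⁺} sup_{x∈ℝ³} ∫_0^1 ∫_{ℝ³} (2πσ)^{−3/2} e^{−‖y−x‖²/(2σ)} (1/‖y‖ − 1/√(η² + ‖y‖²)) dy dσ = 0; that is, the expected time integral over [0,1] of the Coulomb-smoothing error Y_η along a three-dimensional Brownian path, uniformly over the starting point, tends to 0 as η → 0. -/

import Mathlib

open MeasureTheory Real Filter Topology Metric

noncomputable section

local notation "E3" => EuclideanSpace ℝ (Fin 3)

lemma finrank_E3 : Module.finrank ℝ (EuclideanSpace ℝ (Fin 3)) = 3 := finrank_euclideanSpace_fin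

lemma gauss_integrable (x : E3) {σ : ℝ} (hσ : 0 < σ) :
    Integrable (fun y : E3 => rexp (-‖y - x‖ ^ 2 / (2 * σ))) := by
  have hb : (0:ℝ) < 1 / (2 * σ) := by positivity
  have h := (GaussianFourier.integrable_cexp_neg_mul_sq_norm_add
    (b := (1/(2*σ) : ℂ)) (by simpa using hb) 0 (0 : E3)).norm
  have h2 : Integrable (fun v : E3 => rexp (-(1/(2*σ)) * ‖v‖ ^ 2)) := by
    convert h using 2 with v
    rw [Complex.norm_exp]
    norm_num
    left
    norm_cast
  have := h2.comp_sub_right x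
  convert this using 2 with y
  rw [neg_div]
  ring_nf

lemma gauss_integral (x : E3) {σ : ℝ} (hσ : 0 < σ) :
    ∫ y : E3, rexp (-‖y - x‖ ^ 2 / (2 * σ)) = (2 * π * σ) ^ ((3:ℝ) / 2) := by
  have hb : (0:ℝ) < 1 / (2 * σ) := by positivity
  have h := GaussianFourier.integral_rexp_neg_mul_sq_norm (V := E3) hb
  rw [finrank_E3] at h
  have ht : ∫ y : E3, rexp (-‖y - x‖ ^ 2 / (2 * σ))
      = ∫ y : E3, rexp (-(1/(2*σ)) * ‖y‖ ^ 2) := by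
    rw [← integral_sub_right_eq_self (fun y : E3 => rexp (-(1/(2*σ)) * ‖y‖ ^ 2)) x]
    congr 1 with y
    ring_nf
  have : π / (1/(2*σ)) = 2 * π * σ := by field_simp
  rw [ht, h, this]
  norm_num

lemma coulomb_ball_integrableOn {δ : ℝ} (hδ : 0 < δ) :
    IntegrableOn (fun y : E3 => ‖y‖⁻¹) (ball (0:E3) δ) := by
  set B' : ℝ := (volume (ball (0:E3) 1)).toReal with hB'
  set s : ℕ → Set E3 :=
    fun n => closedBall (0:E3) (δ * (2:ℝ)⁻¹ ^ n) \ ball (0:E3) (δ * (2:ℝ)⁻¹ ^ (n+1)) with hs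
  have meas : ∀ n, MeasurableSet (s n) :=
    fun n => measurableSet_closedBall.diff measurableSet_ball
  have memlb : ∀ n, ∀ y ∈ s n, δ * (2:ℝ)⁻¹ ^ (n+1) ≤ ‖y‖ := by
    intro n y hy
    have := hy.2
    simp only [mem_ball_zero_iff, not_lt] at this
    exact this
  have hub : ∀ n, ∀ y ∈ s n, ‖y‖⁻¹ ≤ (δ * (2:ℝ)⁻¹ ^ (n+1))⁻¹ := by
    intro n y hy
    exact inv_anti₀ (by positivity) (memlb n y hy)
  have hfin : ∀ n, volume (s n) ≠ ⊤ := fun n =>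
    ((measure_mono Set.diff_subset).trans_lt measure_closedBall_lt_top).ne
  have hi : ∀ n, IntegrableOn (fun y : E3 => ‖y‖⁻¹) (s n) := by
    intro n
    apply Measure.integrableOn_of_bounded (hfin n)
      (measurable_norm.inv.aestronglyMeasurable)
    refine (ae_restrict_iff' (meas n)).2 (Filter.Eventually.of_forall fun y hy => ?_)
    rw [Real.norm_eq_abs, Pi.inv_apply, abs_of_nonneg (inv_nonneg.2 (norm_nonneg y))]
    exact hub n y hy
  have hvol : ∀ n, (volume (s n)).toReal ≤ (δ * (2:ℝ)⁻¹ ^ n) ^ 3 * B' := by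
    intro n
    have h1 : volume (s n) ≤ volume (closedBall (0:E3) (δ * (2:ℝ)⁻¹ ^ n)) :=
      measure_mono Set.diff_subset
    have h2 := Measure.addHaar_closedBall (μ := (volume : Measure E3)) (0:E3)
      (r := δ * (2:ℝ)⁻¹ ^ n) (by positivity)
    rw [finrank_E3] at h2
    calc (volume (s n)).toReal ≤ (volume (closedBall (0:E3) (δ * (2:ℝ)⁻¹ ^ n))).toReal :=
          ENNReal.toReal_mono measure_closedBall_lt_top.ne h1
      _ = (δ * (2:ℝ)⁻¹ ^ n) ^ 3 * B' := by
          rw [h2, ENNReal.toReal_mul, ENNReal.toReal_ofReal (by positivity)]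
  have hsum : Summable fun n => ∫ y in s n, ‖(fun y : E3 => ‖y‖⁻¹) y‖ := by
    have hle : ∀ n, ∫ y in s n, ‖(fun y : E3 => ‖y‖⁻¹) y‖
        ≤ (2 * B' * δ^2) * ((1:ℝ)/4) ^ n := by
      intro n
      have step1 : ∫ y in s n, ‖(fun y : E3 => ‖y‖⁻¹) y‖
          ≤ ∫ _ in s n, (δ * (2:ℝ)⁻¹ ^ (n+1))⁻¹ := by
        apply setIntegral_mono_on (hi n).norm
          (integrableOn_const (hfin n)) (meas n)
        intro y hy
        rw [Real.norm_eq_abs, abs_of_nonneg (inv_nonneg.2 (norm_nonneg y))]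
        exact hub n y hy
      have step2 : ∫ _ in s n, (δ * (2:ℝ)⁻¹ ^ (n+1))⁻¹
          = (volume (s n)).toReal * (δ * (2:ℝ)⁻¹ ^ (n+1))⁻¹ := by
        rw [setIntegral_const, smul_eq_mul, measureReal_def]
      refine step1.trans ?_
      rw [step2]
      have h3 : (volume (s n)).toReal * (δ * (2:ℝ)⁻¹ ^ (n+1))⁻¹
          ≤ ((δ * (2:ℝ)⁻¹ ^ n) ^ 3 * B') * (δ * (2:ℝ)⁻¹ ^ (n+1))⁻¹ := by
        apply mul_le_mul_of_nonneg_right (hvol n) (by positivity)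
      refine h3.trans (le_of_eq ?_)
      have h2n : ((2:ℝ)⁻¹) ^ (n+1) ≠ 0 := by positivity
      field_simp
      rw [show (1/4:ℝ) ^ n = ((1/2:ℝ) ^ n) ^ 2 by
        rw [← pow_mul, mul_comm n 2, pow_mul]; norm_num, pow_succ]
      ring
    apply Summable.of_nonneg_of_le (fun n => integral_nonneg fun y => norm_nonneg _) hle
    exact (summable_geometric_of_lt_one (by norm_num) (by norm_num)).mul_left _
  have hU : IntegrableOn (fun y : E3 => ‖y‖⁻¹) (⋃ n, s n) :=
    integrableOn_iUnion_of_summable_integral_norm hi hsum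
  have hsub : ball (0:E3) δ \ {0} ⊆ ⋃ n, s n := by
    intro y hy
    have hy0 : (0:ℝ) < ‖y‖ := by
      simp only [Set.mem_diff, Set.mem_singleton_iff] at hy
      exact norm_pos_iff.2 hy.2
    have hyδ : ‖y‖ < δ := by
      have := hy.1; rwa [mem_ball_zero_iff] at this
    have hex : ∃ k, δ * (2:ℝ)⁻¹ ^ k < ‖y‖ := by
      obtain ⟨k, hk⟩ := exists_pow_lt_of_lt_one (div_pos hy0 hδ) (by norm_num : (2:ℝ)⁻¹ < 1)
      exact ⟨k, by rw [mul_comm]; exact (lt_div_iff₀ hδ).1 hk⟩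
    classical
    set n := Nat.find hex with hn
    have hspec : δ * (2:ℝ)⁻¹ ^ n < ‖y‖ := Nat.find_spec hex
    have hn0 : n ≠ 0 := by
      intro h
      rw [h] at hspec
      simp at hspec
      linarith
    have hmin : ¬ (δ * (2:ℝ)⁻¹ ^ (n-1) < ‖y‖) := Nat.find_min hex (by omega)
    refine Set.mem_iUnion.2 ⟨n-1, ?_, ?_⟩
    · rw [mem_closedBall_zero_iff]
      linarith [not_lt.1 hmin]
    · rw [mem_ball_zero_iff, not_lt]
      have : n - 1 + 1 = n := by omega
      rw [this]
      exact hspec.le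
  have h0 : volume ({(0:E3)} : Set E3) = 0 := measure_singleton 0
  have hzero : IntegrableOn (fun y : E3 => ‖y‖⁻¹) ({0} : Set E3) := by
    unfold IntegrableOn
    rw [Measure.restrict_eq_zero.2 h0]
    exact integrable_zero_measure
  have : IntegrableOn (fun y : E3 => ‖y‖⁻¹) ((ball (0:E3) δ \ {0}) ∪ {0}) :=
    (hU.mono_set hsub).union hzero
  exact this.mono_set (fun y hy => by
    by_cases h : y = (0:E3)
    · exact Or.inr h
    · exact Or.inl ⟨hy, h⟩)

lemma coulomb_ball_integral {δ : ℝ} (hδ : 0 < δ) :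
    ∫ y in ball (0:E3) δ, ‖y‖⁻¹
      = 3 * (volume (ball (0:E3) 1)).toReal * (δ ^ 2 / 2) := by
  have hrep : (fun y : E3 => (ball (0:E3) δ).indicator (fun y : E3 => ‖y‖⁻¹) y)
      = fun y : E3 => (fun r : ℝ => if r < δ then r⁻¹ else 0) ‖y‖ := by
    funext y
    by_cases h : ‖y‖ < δ <;>
      simp [Set.indicator, mem_ball_zero_iff, h]
  rw [← integral_indicator measurableSet_ball, hrep,
    integral_fun_norm_addHaar (volume : Measure E3) (fun r : ℝ => if r < δ then r⁻¹ else 0),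
    finrank_E3]
  have hins : (fun r : ℝ => r ^ (3-1) • (if r < δ then r⁻¹ else 0))
      = Set.indicator (Set.Iio δ) (fun r : ℝ => r ^ 2 * r⁻¹) := by
    funext r
    by_cases h : r < δ <;> simp [Set.indicator, h, smul_eq_mul]
  calc (3:ℕ) • (volume (ball (0:E3) 1)).toReal •
        ∫ r in Set.Ioi (0:ℝ), r ^ (3-1) • (if r < δ then r⁻¹ else 0)
      = 3 * (volume (ball (0:E3) 1)).toReal *
        ∫ r in Set.Ioi (0:ℝ), (Set.indicator (Set.Iio δ) (fun r : ℝ => r ^ 2 * r⁻¹)) r := by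
        rw [hins, nsmul_eq_mul, smul_eq_mul]
        push_cast
        ring
    _ = 3 * (volume (ball (0:E3) 1)).toReal * ∫ r in Set.Ioo (0:ℝ) δ, r := by
        rw [setIntegral_indicator measurableSet_Iio, Set.Ioi_inter_Iio]
        congr 1
        refine setIntegral_congr_fun measurableSet_Ioo fun r hr => ?_
        have : r ≠ 0 := ne_of_gt hr.1
        field_simp
    _ = 3 * (volume (ball (0:E3) 1)).toReal * (δ ^ 2 / 2) := by
        congr 1
        rw [← integral_Ioc_eq_integral_Ioo, ← intervalIntegral.integral_of_le hδ.le,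
          integral_id]
        ring


lemma Y_nonneg {η r : ℝ} (hr : 0 < r) :
    0 ≤ 1 / r - 1 / Real.sqrt (η ^ 2 + r ^ 2) := by
  have hs : r ≤ Real.sqrt (η ^ 2 + r ^ 2) :=
    (Real.le_sqrt hr.le (by positivity)).2 (by nlinarith)
  have h1 : 1 / Real.sqrt (η ^ 2 + r ^ 2) ≤ 1 / r :=
    one_div_le_one_div_of_le hr hs
  linarith

lemma Y_le_inv {η r : ℝ} (hr : 0 < r) :
    1 / r - 1 / Real.sqrt (η ^ 2 + r ^ 2) ≤ r⁻¹ := by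
  have h0 : 0 ≤ 1 / Real.sqrt (η ^ 2 + r ^ 2) := by positivity
  rw [← one_div]
  linarith

lemma Y_le_far {η δ r : ℝ} (hδ : 0 < δ) (hr : δ ≤ r) :
    1 / r - 1 / Real.sqrt (η ^ 2 + r ^ 2) ≤ η ^ 2 / (2 * δ ^ 3) := by
  have hr0 : 0 < r := hδ.trans_le hr
  set s := Real.sqrt (η ^ 2 + r ^ 2) with hsdef
  have hs0 : 0 < s := Real.sqrt_pos.2 (by positivity)
  have hsr : r ≤ s := (Real.le_sqrt hr0.le (by positivity)).2 (by nlinarith)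
  have hs2 : s ^ 2 = η ^ 2 + r ^ 2 := Real.sq_sqrt (by positivity)
  have hfac : (s - r) * (s + r) = η ^ 2 := by nlinarith
  have key : 1 / r - 1 / s = η ^ 2 / (r * s * (s + r)) := by
    rw [div_sub_div _ _ (ne_of_gt hr0) (ne_of_gt hs0)]
    rw [div_eq_div_iff (by positivity) (by positivity)]
    linear_combination (r * s) * hfac
  rw [key]
  apply div_le_div_of_nonneg_left (by positivity) (by positivity)
  have h1 : δ ^ 2 ≤ r * s := by nlinarith
  have h2 : 2 * δ ≤ s + r := by linarith
  calc 2 * δ ^ 3 = δ ^ 2 * (2 * δ) := by ring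
    _ ≤ (r * s) * (s + r) := mul_le_mul h1 h2 (by positivity) (by positivity)
    _ = r * s * (s + r) := by ring

def c₁ : ℝ :=
  3 * (volume (ball (0 : EuclideanSpace ℝ (Fin 3)) 1)).toReal * (2 * π) ^ (-(3:ℝ)/2) / 2 + 1/2

lemma ae_ne_zero : ∀ᵐ y : E3, y ≠ (0:E3) := by
  have h0 : volume ({(0:E3)} : Set E3) = 0 := measure_singleton 0
  have := compl_mem_ae_iff.2 h0
  filter_upwards [this] with y hy
  simpa using hy

lemma inner_nonneg (η : ℝ) {σ : ℝ} (hσ : 0 < σ) (x : E3) :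
    0 ≤ ∫ y : E3, (2 * π * σ) ^ (-(3:ℝ)/2) * rexp (-‖y - x‖ ^ 2 / (2 * σ)) *
        (1 / ‖y‖ - 1 / Real.sqrt (η ^ 2 + ‖y‖ ^ 2)) := by
  apply integral_nonneg_of_ae
  filter_upwards [ae_ne_zero] with y hy
  have hr : 0 < ‖y‖ := norm_pos_iff.2 hy
  have h1 : (0:ℝ) ≤ (2 * π * σ) ^ (-(3:ℝ)/2) * rexp (-‖y - x‖ ^ 2 / (2 * σ)) := by positivity
  exact mul_nonneg h1 (Y_nonneg hr)

lemma inner_bound {η σ : ℝ} (hη : 0 < η) (hσ : 0 < σ) (x : E3) :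
    ∫ y : E3, (2 * π * σ) ^ (-(3:ℝ)/2) * rexp (-‖y - x‖ ^ 2 / (2 * σ)) *
        (1 / ‖y‖ - 1 / Real.sqrt (η ^ 2 + ‖y‖ ^ 2))
      ≤ c₁ * η ^ ((4:ℝ)/5) * σ ^ (-(9:ℝ)/10) := by
  set B : ℝ := (volume (ball (0:E3) 1)).toReal with hB
  set A : ℝ := η ^ ((2:ℝ)/5) with hA
  set S : ℝ := σ ^ ((3:ℝ)/10) with hS
  have hA0 : 0 < A := Real.rpow_pos_of_pos hη _
  have hS0 : 0 < S := Real.rpow_pos_of_pos hσ _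
  set δ : ℝ := A * S with hδdef
  have hδ : 0 < δ := mul_pos hA0 hS0
  set C : ℝ := (2 * π * σ) ^ (-(3:ℝ)/2) with hCdef
  have hC : 0 < C := Real.rpow_pos_of_pos (by positivity) _
  set h₁ : E3 → ℝ := fun y => C * (ball (0:E3) δ).indicator (fun y : E3 => ‖y‖⁻¹) y with hh₁
  set h₂ : E3 → ℝ := fun y => (η ^ 2 / (2 * δ ^ 3)) * (C * rexp (-‖y - x‖ ^ 2 / (2 * σ)))
    with hh₂
  have h₁int : Integrable h₁ :=
    ((coulomb_ball_integrableOn hδ).integrable_indicator measurableSet_ball).const_mul C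
  have h₂int : Integrable h₂ := (((gauss_integrable x hσ).const_mul C).const_mul _)
  have hle : ∀ y : E3, y ≠ 0 →
      C * rexp (-‖y - x‖ ^ 2 / (2 * σ)) *
        (1 / ‖y‖ - 1 / Real.sqrt (η ^ 2 + ‖y‖ ^ 2)) ≤ h₁ y + h₂ y := by
    intro y hy
    have hr : 0 < ‖y‖ := norm_pos_iff.2 hy
    have hexp0 : 0 ≤ rexp (-‖y - x‖ ^ 2 / (2 * σ)) := (Real.exp_pos _).le
    have hexp1 : rexp (-‖y - x‖ ^ 2 / (2 * σ)) ≤ 1 := by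
      rw [Real.exp_le_one_iff, neg_div]
      have : (0:ℝ) ≤ ‖y - x‖ ^ 2 / (2 * σ) := by positivity
      linarith
    by_cases hball : ‖y‖ < δ
    · have hind : h₁ y = C * ‖y‖⁻¹ := by
        simp [hh₁, Set.indicator, mem_ball_zero_iff, hball]
      have hh2 : 0 ≤ h₂ y := by positivity
      have : C * rexp (-‖y - x‖ ^ 2 / (2 * σ)) *
          (1 / ‖y‖ - 1 / Real.sqrt (η ^ 2 + ‖y‖ ^ 2)) ≤ C * ‖y‖⁻¹ := by
        calc C * rexp (-‖y - x‖ ^ 2 / (2 * σ)) *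
              (1 / ‖y‖ - 1 / Real.sqrt (η ^ 2 + ‖y‖ ^ 2))
            ≤ C * 1 * (1 / ‖y‖ - 1 / Real.sqrt (η ^ 2 + ‖y‖ ^ 2)) := by
              apply mul_le_mul_of_nonneg_right _ (Y_nonneg hr)
              exact mul_le_mul_of_nonneg_left hexp1 hC.le
          _ = C * (1 / ‖y‖ - 1 / Real.sqrt (η ^ 2 + ‖y‖ ^ 2)) := by ring
          _ ≤ C * ‖y‖⁻¹ := mul_le_mul_of_nonneg_left (Y_le_inv hr) hC.le
      linarith [hind ▸ this]
    · have hind : h₁ y = 0 := by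
        simp [hh₁, Set.indicator, mem_ball_zero_iff, hball]
      push_neg at hball
      have hYf : 1 / ‖y‖ - 1 / Real.sqrt (η ^ 2 + ‖y‖ ^ 2) ≤ η ^ 2 / (2 * δ ^ 3) :=
        Y_le_far hδ hball
      have hCe : 0 ≤ C * rexp (-‖y - x‖ ^ 2 / (2 * σ)) := by positivity
      have : C * rexp (-‖y - x‖ ^ 2 / (2 * σ)) *
          (1 / ‖y‖ - 1 / Real.sqrt (η ^ 2 + ‖y‖ ^ 2)) ≤ h₂ y := by
        rw [hh₂]
        calc C * rexp (-‖y - x‖ ^ 2 / (2 * σ)) *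
              (1 / ‖y‖ - 1 / Real.sqrt (η ^ 2 + ‖y‖ ^ 2))
            ≤ C * rexp (-‖y - x‖ ^ 2 / (2 * σ)) * (η ^ 2 / (2 * δ ^ 3)) :=
              mul_le_mul_of_nonneg_left hYf hCe
          _ = η ^ 2 / (2 * δ ^ 3) * (C * rexp (-‖y - x‖ ^ 2 / (2 * σ))) := by ring
      rw [hind]
      linarith
  have step : ∫ y : E3, C * rexp (-‖y - x‖ ^ 2 / (2 * σ)) *
        (1 / ‖y‖ - 1 / Real.sqrt (η ^ 2 + ‖y‖ ^ 2))
      ≤ ∫ y : E3, (h₁ y + h₂ y) := by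
    apply integral_mono_of_nonneg _ (h₁int.add h₂int)
    · filter_upwards [ae_ne_zero] with y hy
      exact hle y hy
    · filter_upwards [ae_ne_zero] with y hy
      have hr : 0 < ‖y‖ := norm_pos_iff.2 hy
      have h1 : (0:ℝ) ≤ C * rexp (-‖y - x‖ ^ 2 / (2 * σ)) := by positivity
      exact mul_nonneg h1 (Y_nonneg hr)
  refine step.trans ?_
  rw [integral_add h₁int h₂int]
  have hint1 : ∫ y : E3, h₁ y = C * (3 * B * (δ ^ 2 / 2)) := by
    simp only [hh₁]
    rw [integral_const_mul, integral_indicator measurableSet_ball, coulomb_ball_integral hδ]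
  have hint2 : ∫ y : E3, h₂ y = η ^ 2 / (2 * δ ^ 3) := by
    simp only [hh₂]
    rw [integral_const_mul, integral_const_mul, gauss_integral x hσ]
    rw [show C * (2 * π * σ) ^ ((3:ℝ)/2) = 1 by
      rw [hCdef, ← Real.rpow_add (by positivity)]
      norm_num]
    ring
  rw [hint1, hint2]
  -- now pure rpow arithmetic
  have eC : C = (2 * π) ^ (-(3:ℝ)/2) * (S ^ 5)⁻¹ := by
    rw [hCdef, Real.mul_rpow (by positivity) hσ.le]
    congr 1
    rw [hS, ← Real.rpow_natCast (σ ^ ((3:ℝ)/10)) 5, ← Real.rpow_mul hσ.le,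
      ← Real.rpow_neg hσ.le]
    norm_num
  have eA5 : η ^ 2 = A ^ 5 := by
    rw [hA, ← Real.rpow_natCast (η ^ ((2:ℝ)/5)) 5, ← Real.rpow_mul hη.le,
      ← Real.rpow_natCast η 2]
    norm_num
  have eA2 : η ^ ((4:ℝ)/5) = A ^ 2 := by
    rw [hA, ← Real.rpow_natCast (η ^ ((2:ℝ)/5)) 2, ← Real.rpow_mul hη.le]
    norm_num
  have eS3 : σ ^ (-(9:ℝ)/10) = (S ^ 3)⁻¹ := by
    rw [hS, ← Real.rpow_natCast (σ ^ ((3:ℝ)/10)) 3, ← Real.rpow_mul hσ.le,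
      ← Real.rpow_neg hσ.le]
    norm_num
  rw [eC, eA5, eA2, eS3, hδdef, c₁, ← hB]
  apply le_of_eq
  field_simp


lemma rpow_integrableOn : IntegrableOn (fun σ : ℝ => σ ^ (-(9:ℝ)/10)) (Set.Ioc (0:ℝ) 1) := by
  have h := intervalIntegral.intervalIntegrable_rpow' (a := (0:ℝ)) (b := 1) (r := -(9:ℝ)/10) (by norm_num)
  rwa [intervalIntegrable_iff_integrableOn_Ioc_of_le zero_le_one] at h

lemma rpow_int_Ioc : ∫ σ in Set.Ioc (0:ℝ) 1, σ ^ (-(9:ℝ)/10) = 10 := by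
  rw [← intervalIntegral.integral_of_le zero_le_one,
    integral_rpow (Or.inl (by norm_num : (-1:ℝ) < -(9:ℝ)/10)),
    Real.one_rpow, Real.zero_rpow (by norm_num)]
  norm_num

lemma outer_nonneg (η : ℝ) (x : E3) :
    0 ≤ ∫ σ in Set.Ioc (0:ℝ) 1, ∫ y : E3,
      (2 * π * σ) ^ (-(3:ℝ)/2) * rexp (-‖y - x‖ ^ 2 / (2 * σ)) *
        (1 / ‖y‖ - 1 / Real.sqrt (η ^ 2 + ‖y‖ ^ 2)) :=
  setIntegral_nonneg measurableSet_Ioc fun _σ hσ => inner_nonneg η hσ.1 x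

lemma outer_bound {η : ℝ} (hη : 0 < η) (x : E3) :
    (∫ σ in Set.Ioc (0:ℝ) 1, ∫ y : E3,
      (2 * π * σ) ^ (-(3:ℝ)/2) * rexp (-‖y - x‖ ^ 2 / (2 * σ)) *
        (1 / ‖y‖ - 1 / Real.sqrt (η ^ 2 + ‖y‖ ^ 2)))
      ≤ 10 * c₁ * η ^ ((4:ℝ)/5) := by
  have hmaj : IntegrableOn (fun σ : ℝ => c₁ * η ^ ((4:ℝ)/5) * σ ^ (-(9:ℝ)/10))
      (Set.Ioc (0:ℝ) 1) := rpow_integrableOn.const_mul _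
  calc (∫ σ in Set.Ioc (0:ℝ) 1, ∫ y : E3,
        (2 * π * σ) ^ (-(3:ℝ)/2) * rexp (-‖y - x‖ ^ 2 / (2 * σ)) *
          (1 / ‖y‖ - 1 / Real.sqrt (η ^ 2 + ‖y‖ ^ 2)))
      ≤ ∫ σ in Set.Ioc (0:ℝ) 1, c₁ * η ^ ((4:ℝ)/5) * σ ^ (-(9:ℝ)/10) := by
        apply integral_mono_of_nonneg _ hmaj
        · refine (ae_restrict_iff' measurableSet_Ioc).2 (Filter.Eventually.of_forall
            fun σ hσ => ?_)
          exact inner_bound hη hσ.1 x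
        · refine (ae_restrict_iff' measurableSet_Ioc).2 (Filter.Eventually.of_forall
            fun σ hσ => ?_)
          exact inner_nonneg η hσ.1 x
    _ = 10 * c₁ * η ^ ((4:ℝ)/5) := by
        rw [integral_const_mul, rpow_int_Ioc]
        ring

lemma c₁_nonneg : 0 ≤ c₁ := by
  unfold c₁
  have := ENNReal.toReal_nonneg
    (a := volume (ball (0 : EuclideanSpace ℝ (Fin 3)) 1))
  positivity

end

/-- The expected time integral over `[0,1]` of the Coulomb-smoothing error
`Y_η = 1/‖·‖ - 1/√(η² + ‖·‖²)` along three-dimensional Brownian motion, uniformly over the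
starting point `x`, tends to `0` as `η → 0⁺`. -/
theorem coulomb_smoothing_error_uniform_limit :
    Filter.Tendsto (fun η : ℝ =>
        ⨆ x : EuclideanSpace ℝ (Fin 3),
          ∫ σ in Set.Ioc (0 : ℝ) 1, ∫ y : EuclideanSpace ℝ (Fin 3),
            (2 * Real.pi * σ) ^ (-(3 : ℝ) / 2) * Real.exp (-‖y - x‖ ^ 2 / (2 * σ)) *
              (1 / ‖y‖ - 1 / Real.sqrt (η ^ 2 + ‖y‖ ^ 2)))
      (𝓝[>] (0 : ℝ)) (𝓝 0) := by
  have hg : Tendsto (fun η : ℝ => 10 * c₁ * η ^ ((4:ℝ)/5)) (𝓝[>] (0:ℝ)) (𝓝 0) := by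
    have h00 : (0:ℝ) ^ ((4:ℝ)/5) = 0 := Real.zero_rpow (by norm_num)
    have h1 : Tendsto (fun η : ℝ => η ^ ((4:ℝ)/5)) (𝓝 0) (𝓝 0) := by
      have hc := Real.continuousAt_rpow_const 0 ((4:ℝ)/5) (Or.inr (by norm_num))
      have := hc.tendsto
      rwa [h00] at this
    have h2 : Tendsto (fun η : ℝ => η ^ ((4:ℝ)/5)) (𝓝[>] (0:ℝ)) (𝓝 0) :=
      h1.mono_left nhdsWithin_le_nhds
    have := h2.const_mul (10 * c₁)
    simpa using this
  apply squeeze_zero'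
  · refine eventually_nhdsWithin_of_forall fun η hη => ?_
    exact Real.iSup_nonneg fun x => outer_nonneg η x
  · refine eventually_nhdsWithin_of_forall fun η (hη : (0:ℝ) < η) => ?_
    exact Real.iSup_le (fun x => outer_bound hη x)
      (mul_nonneg (mul_nonneg (by norm_num) c₁_nonneg) (Real.rpow_nonneg hη.le _))
  · exact hg
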